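/- Let L be a number field and let F₁ and F₂ be finite Galois extensions of L inside a fixed algebraic closure of L, with F₁ ∩ F₂ = L. If for s = 1, 2 the conjugates of ξ_s ∈ F_s over L form a normal basis of F_s over L, then the conjugates of ξ₁ξ₂ over L form a normal basis of the compositum F₁F₂ over L. -/

import Mathlib

/-- `x` generates a normal basis of `F` over `L`: the family of conjugates
`{γ(x) : γ ∈ Gal(F/L)}` is an `L`-basis of `F`. -/
def IsNormalBasisGen (L F : Type*) [Field L] [Field F] [Algebra L F] (x : F) : Prop :=
  LinearIndependent L (fun σ : F ≃ₐ[L] F => σ x) ∧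
    Submodule.span L (Set.range fun σ : F ≃ₐ[L] F => σ x) = ⊤

set_option maxHeartbeats 1000000 in
set_option synthInstance.maxHeartbeats 400000 in
/-- Let `L` be a number field and `F₁, F₂` finite Galois extensions of `L` inside a fixed
algebraic closure with `F₁ ∩ F₂ = L`. If the conjugates of `ξₛ ∈ Fₛ` form a normal basis of
`Fₛ` over `L` (`s = 1,2`), then the conjugates of `ξ₁ξ₂` form a normal basis of the compositum
`F₁F₂` over `L`. -/
theorem normal_basis_of_compositum (L : Type*) [Field L] [NumberField L]
    (Ω : Type*) [Field Ω] [Algebra L Ω] [IsAlgClosure L Ω]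
    (F₁ F₂ : IntermediateField L Ω)
    [FiniteDimensional L F₁] [FiniteDimensional L F₂]
    [IsGalois L F₁] [IsGalois L F₂]
    (hmeet : F₁ ⊓ F₂ = ⊥)
    (ξ₁ : F₁) (ξ₂ : F₂)
    (h₁ : IsNormalBasisGen L F₁ ξ₁) (h₂ : IsNormalBasisGen L F₂ ξ₂) :
    IsNormalBasisGen L ↥(F₁ ⊔ F₂)
      ⟨(ξ₁ : Ω) * (ξ₂ : Ω),
        mul_mem ((le_sup_left : F₁ ≤ F₁ ⊔ F₂) ξ₁.2) ((le_sup_right : F₂ ≤ F₁ ⊔ F₂) ξ₂.2)⟩ := by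
  classical
  haveI : IsGalois L ↥(F₁ ⊔ F₂) := ⟨⟩
  letI : Algebra F₁ ↥(F₁ ⊔ F₂) :=
    (IntermediateField.inclusion (le_sup_left : F₁ ≤ F₁ ⊔ F₂)).toRingHom.toAlgebra
  letI : Algebra F₂ ↥(F₁ ⊔ F₂) :=
    (IntermediateField.inclusion (le_sup_right : F₂ ≤ F₁ ⊔ F₂)).toRingHom.toAlgebra
  haveI : IsScalarTower L F₁ ↥(F₁ ⊔ F₂) := IsScalarTower.of_algebraMap_eq (congrFun rfl)
  haveI : IsScalarTower L F₂ ↥(F₁ ⊔ F₂) := IsScalarTower.of_algebraMap_eq (congrFun rfl)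
  let r₁ : (↥(F₁ ⊔ F₂) ≃ₐ[L] ↥(F₁ ⊔ F₂)) →* (F₁ ≃ₐ[L] F₁) := AlgEquiv.restrictNormalHom F₁
  let r₂ : (↥(F₁ ⊔ F₂) ≃ₐ[L] ↥(F₁ ⊔ F₂)) →* (F₂ ≃ₐ[L] F₂) := AlgEquiv.restrictNormalHom F₂
  let r := r₁.prod r₂
  have key₁ : ∀ (γ : ↥(F₁ ⊔ F₂) ≃ₐ[L] ↥(F₁ ⊔ F₂)) (x : F₁),
      ((r₁ γ x : F₁) : Ω) = ((γ ⟨x, (le_sup_left : F₁ ≤ F₁ ⊔ F₂) x.2⟩ : ↥(F₁ ⊔ F₂)) : Ω) :=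
    fun γ x => congrArg Subtype.val (AlgEquiv.restrictNormal_commutes γ F₁ x)
  have key₂ : ∀ (γ : ↥(F₁ ⊔ F₂) ≃ₐ[L] ↥(F₁ ⊔ F₂)) (x : F₂),
      ((r₂ γ x : F₂) : Ω) = ((γ ⟨x, (le_sup_right : F₂ ≤ F₁ ⊔ F₂) x.2⟩ : ↥(F₁ ⊔ F₂)) : Ω) :=
    fun γ x => congrArg Subtype.val (AlgEquiv.restrictNormal_commutes γ F₂ x)
  -- injectivity of `r`
  have hinj : Function.Injective r := by
    rw [injective_iff_map_eq_one]
    intro γ hγ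
    have hγ₁ : r₁ γ = 1 := congrArg Prod.fst hγ
    have hγ₂ : r₂ γ = 1 := congrArg Prod.snd hγ
    ext ⟨x, hx⟩
    show ((γ ⟨x, hx⟩ : ↥(F₁ ⊔ F₂)) : Ω) = x
    refine IntermediateField.adjoin_induction (F := L) (s := (F₁ : Set Ω) ∪ (F₂ : Set Ω))
      (p := fun x hx => ((γ ⟨x, hx⟩ : ↥(F₁ ⊔ F₂)) : Ω) = x) ?_ ?_ ?_ ?_ ?_ hx
    · rintro y (hy | hy)
      · have := key₁ γ ⟨y, hy⟩
        rw [hγ₁] at this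
        exact this.symm
      · have := key₂ γ ⟨y, hy⟩
        rw [hγ₂] at this
        exact this.symm
    · intro y
      exact congrArg Subtype.val (γ.commutes y)
    · intro a b ha hb pa pb
      have : (⟨a + b, add_mem ha hb⟩ : ↥(F₁ ⊔ F₂)) = ⟨a, ha⟩ + ⟨b, hb⟩ := rfl
      rw [this, map_add]
      push_cast
      rw [pa, pb]
    · intro a ha pa
      have : (⟨a⁻¹, inv_mem ha⟩ : ↥(F₁ ⊔ F₂)) = (⟨a, ha⟩ : ↥(F₁ ⊔ F₂))⁻¹ := rfl
      rw [this, map_inv₀]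
      show (((γ ⟨a, ha⟩ : ↥(F₁ ⊔ F₂)) : Ω))⁻¹ = a⁻¹
      rw [pa]
    · intro a b ha hb pa pb
      have : (⟨a * b, mul_mem ha hb⟩ : ↥(F₁ ⊔ F₂)) = ⟨a, ha⟩ * ⟨b, hb⟩ := rfl
      rw [this, map_mul]
      push_cast
      rw [pa, pb]
  -- the image of `F₂` in `F₁ ⊔ F₂`
  let F₂' : IntermediateField L ↥(F₁ ⊔ F₂) :=
    (IntermediateField.inclusion (le_sup_right : F₂ ≤ F₁ ⊔ F₂)).fieldRange
  have memF₂' : ∀ y : ↥(F₁ ⊔ F₂), y ∈ F₂' ↔ (y : Ω) ∈ F₂ := by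
    intro y
    constructor
    · rintro ⟨z, rfl⟩; exact z.2
    · intro hy; exact ⟨⟨y, hy⟩, rfl⟩
  have hker : MonoidHom.ker r₂ = F₂'.fixingSubgroup := by
    ext γ
    rw [MonoidHom.mem_ker]
    have hmemfix : γ ∈ F₂'.fixingSubgroup ↔
        ∀ y ∈ (F₂' : Set ↥(F₁ ⊔ F₂)), γ • y = y := mem_fixingSubgroup_iff _
    rw [hmemfix]
    constructor
    · intro hγ y hy
      have hy2 : (y : Ω) ∈ F₂ := (memF₂' y).mp hy
      have h := key₂ γ ⟨(y : Ω), hy2⟩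
      rw [hγ, AlgEquiv.one_apply] at h
      have hyy : y = ⟨(y : Ω), (le_sup_right : F₂ ≤ F₁ ⊔ F₂) hy2⟩ := Subtype.ext rfl
      rw [AlgEquiv.smul_def, hyy]
      exact Subtype.ext h.symm
    · intro hγ
      ext z
      have hz2 : (⟨(z : Ω), (le_sup_right : F₂ ≤ F₁ ⊔ F₂) z.2⟩ : ↥(F₁ ⊔ F₂)) ∈ F₂' :=
        (memF₂' _).mpr z.2
      have hfix := hγ _ hz2
      rw [AlgEquiv.smul_def] at hfix
      rw [AlgEquiv.one_apply]
      show ((r₂ γ z : F₂) : Ω) = ((z : F₂) : Ω)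
      rw [key₂ γ z, hfix]
  have hfixed : IntermediateField.fixedField (MonoidHom.ker r₂) = F₂' := by
    rw [hker]
    exact IsGalois.fixedField_fixingSubgroup F₂'
  -- every `σ₁` lifts to an automorphism trivial on `F₂`
  have hB : ∀ σ₁ : F₁ ≃ₐ[L] F₁, ∃ γ, r₁ γ = σ₁ ∧ r₂ γ = 1 := by
    have htop : Subgroup.map r₁ (MonoidHom.ker r₂) = ⊤ := by
      have hbot : IntermediateField.fixedField (Subgroup.map r₁ (MonoidHom.ker r₂)) = ⊥ := by
        refine le_antisymm ?_ bot_le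
        intro x hx
        have hx2 : (x : Ω) ∈ F₂ := by
          have hmem : (⟨(x : Ω), (le_sup_left : F₁ ≤ F₁ ⊔ F₂) x.2⟩ : ↥(F₁ ⊔ F₂)) ∈
              IntermediateField.fixedField (MonoidHom.ker r₂) := by
            rintro ⟨γ, hγ⟩
            have hfixx : r₁ γ • x = x := hx ⟨r₁ γ, Subgroup.mem_map_of_mem r₁ hγ⟩
            have hfixx' : ((r₁ γ x : F₁) : Ω) = (x : Ω) := congrArg Subtype.val hfixx
            refine Subtype.ext ?_
            show ((γ ⟨(x : Ω), (le_sup_left : F₁ ≤ F₁ ⊔ F₂) x.2⟩ : ↥(F₁ ⊔ F₂)) : Ω) = (x : Ω)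
            rw [← key₁ γ x, hfixx']
          rw [hfixed] at hmem
          exact (memF₂' _).mp hmem
        have : (x : Ω) ∈ F₁ ⊓ F₂ := ⟨x.2, hx2⟩
        rw [hmeet, IntermediateField.mem_bot] at this
        obtain ⟨l, hl⟩ := this
        rw [IntermediateField.mem_bot]
        exact ⟨l, Subtype.ext (by rw [← hl]; rfl)⟩
      rw [← IntermediateField.fixingSubgroup_fixedField (Subgroup.map r₁ (MonoidHom.ker r₂)),
        hbot, IntermediateField.fixingSubgroup_bot]
    intro σ₁
    have : σ₁ ∈ Subgroup.map r₁ (MonoidHom.ker r₂) := htop ▸ Subgroup.mem_top σ₁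
    obtain ⟨γ, hγker, hγ⟩ := this
    exact ⟨γ, hγ, hγker⟩
  -- surjectivity of `r`
  have hsurj : Function.Surjective r := by
    rintro ⟨σ₁, σ₂⟩
    obtain ⟨δ, hδ⟩ := AlgEquiv.restrictNormalHom_surjective (F := L) (K₁ := ↥F₂) (E := ↥(F₁ ⊔ F₂)) σ₂
    obtain ⟨τ, hτ1, hτ2⟩ := hB (σ₁ * (r₁ δ)⁻¹)
    refine ⟨τ * δ, ?_⟩
    have : r (τ * δ) = (r₁ τ * r₁ δ, r₂ τ * r₂ δ) := by
      simp [r, map_mul]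
    rw [this, hτ1, hτ2]
    simp [hδ]
    exact hδ
  -- counting
  have hcard : Fintype.card (↥(F₁ ⊔ F₂) ≃ₐ[L] ↥(F₁ ⊔ F₂)) =
      Fintype.card (F₁ ≃ₐ[L] F₁) * Fintype.card (F₂ ≃ₐ[L] F₂) := by
    rw [← Fintype.card_prod]
    exact Fintype.card_of_bijective ⟨hinj, hsurj⟩
  have hrank : Module.finrank L ↥(F₁ ⊔ F₂) = Module.finrank L F₁ * Module.finrank L F₂ := by
    rw [← IsGalois.card_aut_eq_finrank L ↥(F₁ ⊔ F₂), ← IsGalois.card_aut_eq_finrank L F₁,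
      ← IsGalois.card_aut_eq_finrank L F₂]
    simpa only [Nat.card_eq_fintype_card] using hcard
  have hld : F₁.LinearDisjoint F₂ := IntermediateField.LinearDisjoint.of_finrank_sup hrank
  have hmul := hld.linearIndependent_mul h₁.1 h₂.1
  let g : (F₁ ≃ₐ[L] F₁) × (F₂ ≃ₐ[L] F₂) → ↥(F₁ ⊔ F₂) := fun i =>
    ⟨(i.1 ξ₁ : Ω) * (i.2 ξ₂ : Ω),
      mul_mem ((le_sup_left : F₁ ≤ F₁ ⊔ F₂) (i.1 ξ₁).2) ((le_sup_right : F₂ ≤ F₁ ⊔ F₂) (i.2 ξ₂).2)⟩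
  have hg : LinearIndependent L g := by
    apply LinearIndependent.of_comp (F₁ ⊔ F₂).val.toLinearMap
    exact hmul
  have hfeq : (fun γ : ↥(F₁ ⊔ F₂) ≃ₐ[L] ↥(F₁ ⊔ F₂) =>
      γ ⟨(ξ₁ : Ω) * (ξ₂ : Ω),
        mul_mem ((le_sup_left : F₁ ≤ F₁ ⊔ F₂) ξ₁.2) ((le_sup_right : F₂ ≤ F₁ ⊔ F₂) ξ₂.2)⟩)
      = g ∘ r := by
    funext γ
    refine Subtype.ext ?_
    show ((γ _ : ↥(F₁ ⊔ F₂)) : Ω) = (r₁ γ ξ₁ : Ω) * (r₂ γ ξ₂ : Ω)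
    have hz : (⟨(ξ₁ : Ω) * (ξ₂ : Ω),
        mul_mem ((le_sup_left : F₁ ≤ F₁ ⊔ F₂) ξ₁.2)
          ((le_sup_right : F₂ ≤ F₁ ⊔ F₂) ξ₂.2)⟩ : ↥(F₁ ⊔ F₂))
        = ⟨(ξ₁ : Ω), (le_sup_left : F₁ ≤ F₁ ⊔ F₂) ξ₁.2⟩ * ⟨(ξ₂ : Ω), (le_sup_right : F₂ ≤ F₁ ⊔ F₂) ξ₂.2⟩ := rfl
    rw [hz, map_mul]
    push_cast
    rw [key₁ γ ξ₁, key₂ γ ξ₂]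
  have hli : LinearIndependent L (fun γ : ↥(F₁ ⊔ F₂) ≃ₐ[L] ↥(F₁ ⊔ F₂) =>
      γ ⟨(ξ₁ : Ω) * (ξ₂ : Ω),
        mul_mem ((le_sup_left : F₁ ≤ F₁ ⊔ F₂) ξ₁.2)
          ((le_sup_right : F₂ ≤ F₁ ⊔ F₂) ξ₂.2)⟩) := by
    rw [hfeq]
    exact hg.comp r hinj
  refine ⟨hli, ?_⟩
  exact hli.span_eq_top_of_card_eq_finrank (Nat.card_eq_fintype_card.symm.trans (IsGalois.card_aut_eq_finrank L ↥(F₁ ⊔ F₂)))
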